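/- Let G be a locally compact Hausdorff r-discrete groupoid with non-compact unit space, and let G̃ be its Alexandrov groupoid. If G is étale (the range map is a local homeomorphism), then G̃ is étale. -/

import Mathlib

/-- A topological groupoid structure on a topological space `G`.  The range and source
maps land in the set of units (idempotents of `src`), composition `mul g h` is defined
when `src g = rng h`, and all structure maps are continuous. -/
structure TopGroupoid (G : Type*) [TopologicalSpace G] where
  src : G → G
  rng : G → G
  mul : (g h : G) → src g = rng h → G
  inv : G → G
  src_src : ∀ g, src (src g) = src g
  rng_src : ∀ g, rng (src g) = src g
  src_rng : ∀ g, src (rng g) = rng g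
  rng_rng : ∀ g, rng (rng g) = rng g
  src_mul : ∀ g h hgh, src (mul g h hgh) = src h
  rng_mul : ∀ g h hgh, rng (mul g h hgh) = rng g
  mul_assoc : ∀ g h k (hgh : src g = rng h) (hhk : src h = rng k)
      (h₁ : src (mul g h hgh) = rng k) (h₂ : src g = rng (mul h k hhk)),
      mul (mul g h hgh) k h₁ = mul g (mul h k hhk) h₂
  rng_mul_cancel : ∀ g (h : src (rng g) = rng g), mul (rng g) g h = g
  mul_src_cancel : ∀ g (h : src g = rng (src g)), mul g (src g) h = g
  src_inv : ∀ g, src (inv g) = rng g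
  rng_inv : ∀ g, rng (inv g) = src g
  inv_inv : ∀ g, inv (inv g) = g
  inv_mul_cancel : ∀ g (h : src (inv g) = rng g), mul (inv g) g h = src g
  mul_inv_cancel : ∀ g (h : src g = rng (inv g)), mul g (inv g) h = rng g
  continuous_src : Continuous src
  continuous_rng : Continuous rng
  continuous_inv : Continuous inv
  continuous_mul : Continuous fun p : {p : G × G // src p.1 = rng p.2} =>
    mul p.1.1 p.1.2 p.2

namespace TopGroupoid

variable {G : Type*} [TopologicalSpace G] (𝒢 : TopGroupoid G)

/-- The unit space `G⁰` of the groupoid. -/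
def units : Set G := {x | 𝒢.src x = x}

/-- A groupoid is principal if `g ↦ (r g, s g)` is injective. -/
def Principal : Prop := Function.Injective fun g => (𝒢.rng g, 𝒢.src g)

/-- A subset of `G` closed under inversion and composition. -/
def IsSubgroupoid (S : Set G) : Prop :=
  (∀ g ∈ S, 𝒢.inv g ∈ S) ∧
    ∀ g ∈ S, ∀ h ∈ S, ∀ hgh : 𝒢.src g = 𝒢.rng h, 𝒢.mul g h hgh ∈ S

/-- The subgroupoid generated by a subset. -/
def gen (X : Set G) : Set G := ⋂₀ {S | X ⊆ S ∧ 𝒢.IsSubgroupoid S}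

/-- A groupoid is étale if its range map is a local homeomorphism. -/
def Etale : Prop :=
  ∀ g : G, ∃ U : Set G, IsOpen U ∧ g ∈ U ∧ Set.InjOn 𝒢.rng U ∧
    ∀ V ⊆ U, IsOpen V → IsOpen (𝒢.rng '' V)

/-- Dynamic asymptotic dimension at most `d` (Guentner–Willett–Yu): for every open
precompact `V ⊆ G` there are open sets `U₀, …, U_d` in the unit space covering
`s(V) ∪ r(V)` such that each `⟨{g ∈ V : s g, r g ∈ U i}⟩` is precompact. -/
def DadLE (d : ℕ) : Prop :=
  ∀ V : Set G, IsOpen V → IsCompact (closure V) →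
    ∃ U : Fin (d + 1) → Set G,
      (∀ i, IsOpen (U i) ∧ U i ⊆ 𝒢.units) ∧
      (𝒢.src '' V ∪ 𝒢.rng '' V ⊆ ⋃ i, U i) ∧
      ∀ i, IsCompact (closure (𝒢.gen {g ∈ V | 𝒢.src g ∈ U i ∧ 𝒢.rng g ∈ U i}))

/-- Dynamic asymptotic dimension as an extended natural number. -/
noncomputable def dad : ℕ∞ :=
  sInf {m : ℕ∞ | ∃ d : ℕ, m = d ∧ 𝒢.DadLE d}

end TopGroupoid

variable {G : Type*} [TopologicalSpace G]

/-- The basis for the topology of the Alexandrov groupoid `G̃ = G ∪ {∞}`: the whole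
space, the open sets of `G`, and the open sets of the one-point compactification of
the unit space. -/
def alexBasis (𝒢 : TopGroupoid G) : Set (Set (Option G)) :=
  {Set.univ} ∪ {S | ∃ U : Set G, IsOpen U ∧ S = some '' U} ∪
    {S | ∃ K : Set G, K ⊆ 𝒢.units ∧ IsCompact K ∧
      S = insert none (some '' (𝒢.units \ K))}

/-- The topology of the Alexandrov groupoid. -/
def alexTop (𝒢 : TopGroupoid G) : TopologicalSpace (Option G) :=
  TopologicalSpace.generateFrom (alexBasis 𝒢)

/-- if `G` is a locally compact Hausdorff r-discrete groupoid with
non-compact unit space which is étale, then its Alexandrov groupoid `G̃` is étale. -/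
theorem stmt_13 {G : Type*} [TopologicalSpace G] [T2Space G] [LocallyCompactSpace G]
    (𝒢 : TopGroupoid G) (hrd : IsOpen 𝒢.units) (hnc : ¬ IsCompact 𝒢.units)
    (het : 𝒢.Etale)
    [inst : TopologicalSpace (Option G)] (hinst : inst = alexTop 𝒢)
    (𝒢' : TopGroupoid (Option G))
    (hsrc : ∀ g : G, 𝒢'.src (some g) = some (𝒢.src g)) (hsrc' : 𝒢'.src none = none)
    (hrng : ∀ g : G, 𝒢'.rng (some g) = some (𝒢.rng g)) (hrng' : 𝒢'.rng none = none)
    (hinv : ∀ g : G, 𝒢'.inv (some g) = some (𝒢.inv g)) (hinv' : 𝒢'.inv none = none)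
    (hmul : ∀ (g h : G) (hgh : 𝒢.src g = 𝒢.rng h)
        (hgh' : 𝒢'.src (some g) = 𝒢'.rng (some h)),
      𝒢'.mul (some g) (some h) hgh' = some (𝒢.mul g h hgh))
    (hmul' : ∀ hinf : 𝒢'.src none = 𝒢'.rng none, 𝒢'.mul none none hinf = none) :
    𝒢'.Etale := by
  subst hinst
  letI : TopologicalSpace (Option G) := alexTop 𝒢
  -- `some '' U` is open for `U` open
  have hsomeOpen : ∀ U : Set G, IsOpen U → IsOpen (some '' U) := fun U hU =>
    TopologicalSpace.GenerateOpen.basic _ (Or.inl (Or.inr ⟨U, hU, rfl⟩))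
  -- `some` is continuous
  have hcont : Continuous (some : G → Option G) := by
    refine continuous_generateFrom_iff.mpr ?_
    rintro S ((h | ⟨U, hU, rfl⟩) | ⟨K, hKu, hK, rfl⟩)
    · simp only [Set.mem_singleton_iff] at h; subst h; exact isOpen_univ
    · rwa [Set.preimage_image_eq _ (Option.some_injective G)]
    · have : (some : G → Option G) ⁻¹' (insert none (some '' (𝒢.units \ K)))
          = 𝒢.units \ K := by
        ext x
        simp [Option.some_injective G |>.mem_set_image]
      rw [this]
      exact hrd.sdiff hK.isClosed
  intro g
  match g with
  | some x =>
    obtain ⟨U, hUo, hxU, hUinj, hUim⟩ := het x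
    refine ⟨some '' U, hsomeOpen U hUo, ⟨x, hxU, rfl⟩, ?_, ?_⟩
    · rintro a ⟨p, hp, rfl⟩ b ⟨q, hq, rfl⟩ hab
      rw [hrng p, hrng q] at hab
      exact congrArg some (hUinj hp hq (Option.some_injective G hab))
    · intro V hVU hV
      set W : Set G := some ⁻¹' V with hW
      have hWU : W ⊆ U := by
        intro w hw
        obtain ⟨u, hu, he⟩ := hVU hw
        rwa [Option.some_injective G he] at hu
      have hWopen : IsOpen W := hcont.isOpen_preimage V hV
      have him : 𝒢'.rng '' V = some '' (𝒢.rng '' W) := by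
        ext a
        constructor
        · rintro ⟨b, hb, rfl⟩
          obtain ⟨u, hu, rfl⟩ := hVU hb
          exact ⟨𝒢.rng u, ⟨u, hb, rfl⟩, (hrng u).symm⟩
        · rintro ⟨b, ⟨w, hw, rfl⟩, rfl⟩
          exact ⟨some w, hw, hrng w⟩
      rw [him]
      exact hsomeOpen _ (hUim W hWU hWopen)
  | none =>
    have hUopen : IsOpen (insert none (some '' 𝒢.units) : Set (Option G)) := by
      have : (insert none (some '' 𝒢.units) : Set (Option G))
          = insert none (some '' (𝒢.units \ (∅ : Set G))) := by
        rw [Set.diff_empty]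
      rw [this]
      exact TopologicalSpace.GenerateOpen.basic _
        (Or.inr ⟨∅, Set.empty_subset _, isCompact_empty, rfl⟩)
    have hid : ∀ a ∈ (insert none (some '' 𝒢.units) : Set (Option G)),
        𝒢'.rng a = a := by
      rintro a (rfl | ⟨u, hu, rfl⟩)
      · exact hrng'
      · rw [hrng u]
        have : 𝒢.rng u = u := by
          have h1 : 𝒢.src u = u := hu
          calc 𝒢.rng u = 𝒢.rng (𝒢.src u) := by rw [h1]
            _ = 𝒢.src u := 𝒢.rng_src u
            _ = u := h1
        rw [this]
    refine ⟨insert none (some '' 𝒢.units), hUopen, Set.mem_insert _ _, ?_, ?_⟩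
    · intro a ha b hb hab
      rw [hid a ha, hid b hb] at hab
      exact hab
    · intro V hVU hV
      have : 𝒢'.rng '' V = V := by
        ext a
        constructor
        · rintro ⟨b, hb, rfl⟩
          rwa [hid b (hVU hb)]
        · intro ha
          exact ⟨a, ha, hid a (hVU ha)⟩
      rwa [this]
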